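/- Let N, K be positive integers, ε > 0, Λ > 0, ω > 0 and σ > 0, and let λ₁ = inf { Σ_{ν=1}^N ‖∇ν⁺φ‖₂² / ‖φ‖₂² : φ ∈ ℓ²(ℤ^N_K), φ ≠ 0 } be the principal eigenvalue of −Δ_d with Dirichlet boundary conditions. If φ ∈ ℓ²(ℤ^N_K), φ ≠ 0, satisfies −ε(Δ_d φ)_n + ω φ_n = Λ |φ_n|^{2σ} φ_n for all n with ‖n‖_∞ ≤ K (where φ_n = 0 for ‖n‖_∞ > K), then ‖φ‖₂² ≥ [ (ελ₁ + ω) / (Λ(2σ+1)) ]^{1/σ}. -/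
import Mathlib


open scoped BigOperators
noncomputable section

/-- The lattice `ℤ^N`. -/
abbrev Zn (N : ℕ) := Fin N → ℤ

/-- The ν-th standard basis vector of `ℤ^N`. -/
def evec {N : ℕ} (ν : Fin N) : Zn N := fun i => if i = ν then 1 else 0

/-- The discrete Laplacian on `ℤ^N`. -/
def dLap {N : ℕ} (φ : Zn N → ℂ) : Zn N → ℂ :=
  fun n => ∑ ν : Fin N, (φ (n + evec ν) + φ (n - evec ν) - 2 * φ n)

/-- The forward difference operator in direction ν. -/
def fdiff {N : ℕ} (ν : Fin N) (φ : Zn N → ℂ) : Zn N → ℂ :=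
  fun n => φ (n + evec ν) - φ n

/-- `n` lies in the box `‖n‖_∞ ≤ K`. -/
def inBox {N : ℕ} (K : ℕ) (n : Zn N) : Prop := ∀ i, |n i| ≤ (K : ℤ)

/-- `φ` is supported in the box `‖n‖_∞ ≤ K` (i.e. `φ ∈ ℓ²(ℤ^N_K)`). -/
def suppIn {N : ℕ} (K : ℕ) (φ : Zn N → ℂ) : Prop := ∀ n, ¬ inBox K n → φ n = 0

/-- The principal (Dirichlet) eigenvalue of `−Δ_d` on `ℓ²(ℤ^N_K)`, as the
infimum of the Rayleigh quotient. -/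
def lam1 (N K : ℕ) : ℝ :=
  sInf { r : ℝ | ∃ φ : Zn N → ℂ, suppIn K φ ∧ φ ≠ 0 ∧
    r = (∑ ν : Fin N, ∑' n, ‖fdiff ν φ n‖ ^ 2) / (∑' n, ‖φ n‖ ^ 2) }

private lemma mul_conj_eq (z : ℂ) : z * (starRingEnd ℂ) z = ((‖z‖ ^ 2 : ℝ) : ℂ) := by
  rw [Complex.mul_conj]; norm_cast; simp [Complex.normSq_eq_norm_sq]

/-- Summation by parts for one direction. -/
private lemma sbp {N : ℕ} (φ : Zn N → ℂ) (S : Finset (Zn N)) (ν : Fin N)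
    (h0 : ∀ n ∉ S, φ n = 0) (hp : ∀ n ∉ S, φ (n + evec ν) = 0)
    (hm : ∀ n ∉ S, φ (n - evec ν) = 0) :
    ∑' n, (φ (n + evec ν) + φ (n - evec ν) - 2 * φ n) * (starRingEnd ℂ) (φ n)
      = -(((∑' n, ‖fdiff ν φ n‖ ^ 2 : ℝ)) : ℂ) := by
  set e := evec ν with he
  set f1 : Zn N → ℂ := fun n => (φ (n + e) - φ n) * (starRingEnd ℂ) (φ n) with hf1
  set f2 : Zn N → ℂ := fun n => (φ (n - e) - φ n) * (starRingEnd ℂ) (φ n) with hf2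
  set f3 : Zn N → ℂ := fun n => (φ n - φ (n + e)) * (starRingEnd ℂ) (φ (n + e)) with hf3
  have s1 : Summable f1 := summable_of_ne_finset_zero (s := S)
    (fun n hn => by simp [hf1, h0 n hn, hp n hn])
  have s2 : Summable f2 := summable_of_ne_finset_zero (s := S)
    (fun n hn => by simp [hf2, h0 n hn, hm n hn])
  have s3 : Summable f3 := summable_of_ne_finset_zero (s := S)
    (fun n hn => by simp [hf3, h0 n hn, hp n hn])
  have hshift : ∑' n, f2 n = ∑' n, f3 n := by
    have h := Equiv.tsum_eq (Equiv.addRight e) f2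
    rw [← h]
    refine tsum_congr fun n => ?_
    simp only [Equiv.coe_addRight, hf2, hf3, add_sub_cancel_right]
  calc ∑' n, (φ (n + e) + φ (n - e) - 2 * φ n) * (starRingEnd ℂ) (φ n)
      = ∑' n, (f1 n + f2 n) := tsum_congr fun n => by simp only [hf1, hf2]; ring
    _ = (∑' n, f1 n) + ∑' n, f2 n := Summable.tsum_add s1 s2
    _ = (∑' n, f1 n) + ∑' n, f3 n := by rw [hshift]
    _ = ∑' n, (f1 n + f3 n) := (Summable.tsum_add s1 s3).symm
    _ = ∑' n, -(((‖fdiff ν φ n‖ ^ 2 : ℝ)) : ℂ) := by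
        refine tsum_congr fun n => ?_
        have : f1 n + f3 n = -(fdiff ν φ n * (starRingEnd ℂ) (fdiff ν φ n)) := by
          simp only [hf1, hf3, fdiff, map_sub]; ring
        rw [this, mul_conj_eq]
    _ = -∑' n, (((‖fdiff ν φ n‖ ^ 2 : ℝ)) : ℂ) := tsum_neg
    _ = -(((∑' n, ‖fdiff ν φ n‖ ^ 2 : ℝ)) : ℂ) := by rw [Complex.ofReal_tsum]

/-- Threshold for the power of nontrivial breather solutions of the focusing
DNLS with power nonlinearity on the finite lattice (Dirichlet boundary
conditions): `‖φ‖₂² ≥ [(ελ₁ + ω)/(Λ(2σ+1))]^{1/σ}`. -/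
theorem power_threshold_focusing_power_dirichlet {N K : ℕ} (hN : 0 < N)
    (hK : 0 < K) (ε Λ ω σ : ℝ) (hε : 0 < ε) (hΛ : 0 < Λ) (hω : 0 < ω)
    (hσ : 0 < σ)
    (φ : Zn N → ℂ) (hsupp : suppIn K φ) (hne : φ ≠ 0)
    (heq : ∀ n : Zn N, inBox K n →
      -(ε : ℂ) * dLap φ n + (ω : ℂ) * φ n
        = (Λ : ℂ) * ((‖φ n‖ ^ (2 * σ) : ℝ) : ℂ) * φ n) :
    ((ε * lam1 N K + ω) / (Λ * (2 * σ + 1))) ^ (1 / σ) ≤ ∑' n, ‖φ n‖ ^ 2 := by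
  classical
  set B' : Finset (Zn N) :=
    Finset.Icc (fun _ => -((K : ℤ) + 1)) (fun _ => (K : ℤ) + 1) with hB'
  -- shifted support vanishing
  have habs : ∀ s : Zn N, (∀ i, |s i| ≤ 1) → ∀ n ∉ B', φ (n + s) = 0 := by
    intro s hs n hn
    apply hsupp
    intro hbox
    apply hn
    simp only [hB', Finset.mem_Icc, Pi.le_def]
    constructor <;> intro i
    · have h1 := abs_le.mp (hbox i)
      have h2 := abs_le.mp (hs i)
      have h3 : (n + s) i = n i + s i := rfl
      rw [h3] at h1; omega
    · have h1 := abs_le.mp (hbox i)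
      have h2 := abs_le.mp (hs i)
      have h3 : (n + s) i = n i + s i := rfl
      rw [h3] at h1; omega
  have hevec : ∀ (ν : Fin N) (i : Fin N), |evec ν i| ≤ 1 := by
    intro ν i; by_cases h : i = ν <;> simp [evec, h]
  have hz : ∀ n ∉ B', φ n = 0 := by
    intro n hn
    have := habs 0 (fun i => by simp) n hn
    simpa using this
  have hzp : ∀ (ν : Fin N), ∀ n ∉ B', φ (n + evec ν) = 0 :=
    fun ν n hn => habs (evec ν) (hevec ν) n hn
  have hzm : ∀ (ν : Fin N), ∀ n ∉ B', φ (n - evec ν) = 0 := by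
    intro ν n hn
    have := habs (-evec ν) (fun i => by simpa using hevec ν i) n hn
    simpa [sub_eq_add_neg] using this
  -- basic real summabilities
  have sM : Summable (fun n : Zn N => ‖φ n‖ ^ 2) :=
    summable_of_ne_finset_zero (s := B') (fun n hn => by simp [hz n hn])
  have sFd : ∀ ν : Fin N, Summable (fun n : Zn N => ‖fdiff ν φ n‖ ^ 2) := fun ν =>
    summable_of_ne_finset_zero (s := B')
      (fun n hn => by simp [fdiff, hz n hn, hzp ν n hn])
  set A : ℝ := ∑ ν : Fin N, ∑' n, ‖fdiff ν φ n‖ ^ 2 with hA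
  set M : ℝ := ∑' n, ‖φ n‖ ^ 2 with hM
  set P : ℝ := ∑' n, ‖φ n‖ ^ (2 * σ) * ‖φ n‖ ^ 2 with hP
  have sP : Summable (fun n : Zn N => ‖φ n‖ ^ (2 * σ) * ‖φ n‖ ^ 2) :=
    summable_of_ne_finset_zero (s := B') (fun n hn => by simp [hz n hn])
  -- Laplacian pairing identity
  have hLap : ∑' n, dLap φ n * (starRingEnd ℂ) (φ n) = -((A : ℝ) : ℂ) := by
    have hterm : ∀ ν : Fin N, Summable (fun n : Zn N =>
        (φ (n + evec ν) + φ (n - evec ν) - 2 * φ n) * (starRingEnd ℂ) (φ n)) := by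
      intro ν
      exact summable_of_ne_finset_zero (s := B')
        (fun n hn => by simp [hz n hn])
    calc ∑' n, dLap φ n * (starRingEnd ℂ) (φ n)
        = ∑' n, ∑ ν : Fin N,
            (φ (n + evec ν) + φ (n - evec ν) - 2 * φ n) * (starRingEnd ℂ) (φ n) := by
          refine tsum_congr fun n => ?_
          rw [dLap, Finset.sum_mul]
      _ = ∑ ν : Fin N, ∑' n,
            (φ (n + evec ν) + φ (n - evec ν) - 2 * φ n) * (starRingEnd ℂ) (φ n) :=
          Summable.tsum_finsetSum (fun ν _ => hterm ν)
      _ = ∑ ν : Fin N, -(((∑' n, ‖fdiff ν φ n‖ ^ 2 : ℝ)) : ℂ) :=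
          Finset.sum_congr rfl fun ν _ => sbp φ B' ν hz (hzp ν) (hzm ν)
      _ = -((A : ℝ) : ℂ) := by
          rw [hA]; push_cast; rw [Finset.sum_neg_distrib]
  -- pointwise equation paired with conj φ
  have hpt : ∀ n : Zn N, (-(ε : ℂ) * dLap φ n + (ω : ℂ) * φ n) * (starRingEnd ℂ) (φ n)
      = ((Λ * (‖φ n‖ ^ (2 * σ) * ‖φ n‖ ^ 2) : ℝ) : ℂ) := by
    intro n
    by_cases h : inBox K n
    · rw [heq n h]
      have : (Λ : ℂ) * ((‖φ n‖ ^ (2 * σ) : ℝ) : ℂ) * φ n * (starRingEnd ℂ) (φ n)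
          = (Λ : ℂ) * ((‖φ n‖ ^ (2 * σ) : ℝ) : ℂ) * (φ n * (starRingEnd ℂ) (φ n)) := by ring
      rw [this, mul_conj_eq]
      push_cast
      ring
    · have h0 : φ n = 0 := hsupp n h
      simp [h0, Real.zero_rpow (by positivity : 2 * σ ≠ 0)]
  -- main energy identity
  have hmain : ε * A + ω * M = Λ * P := by
    have sDL : Summable (fun n : Zn N => dLap φ n * (starRingEnd ℂ) (φ n)) :=
      summable_of_ne_finset_zero (s := B') (fun n hn => by simp [hz n hn])
    have sPh : Summable (fun n : Zn N => φ n * (starRingEnd ℂ) (φ n)) :=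
      summable_of_ne_finset_zero (s := B') (fun n hn => by simp [hz n hn])
    have hY : ∑' n, φ n * (starRingEnd ℂ) (φ n) = ((M : ℝ) : ℂ) := by
      rw [hM, Complex.ofReal_tsum]
      exact tsum_congr fun n => mul_conj_eq (φ n)
    have hLHS : ∑' n, (-(ε : ℂ) * dLap φ n + (ω : ℂ) * φ n) * (starRingEnd ℂ) (φ n)
        = ((ε * A + ω * M : ℝ) : ℂ) := by
      calc ∑' n, (-(ε : ℂ) * dLap φ n + (ω : ℂ) * φ n) * (starRingEnd ℂ) (φ n)
          = ∑' n, (-(ε : ℂ) * (dLap φ n * (starRingEnd ℂ) (φ n))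
              + (ω : ℂ) * (φ n * (starRingEnd ℂ) (φ n))) :=
            tsum_congr fun n => by ring
        _ = (∑' n, -(ε : ℂ) * (dLap φ n * (starRingEnd ℂ) (φ n)))
              + ∑' n, (ω : ℂ) * (φ n * (starRingEnd ℂ) (φ n)) :=
            Summable.tsum_add (sDL.mul_left _) (sPh.mul_left _)
        _ = -(ε : ℂ) * ∑' n, (dLap φ n * (starRingEnd ℂ) (φ n))
              + (ω : ℂ) * ∑' n, (φ n * (starRingEnd ℂ) (φ n)) := by
            rw [tsum_mul_left, tsum_mul_left]
        _ = -(ε : ℂ) * (-((A : ℝ) : ℂ)) + (ω : ℂ) * ((M : ℝ) : ℂ) := by rw [hLap, hY]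
        _ = ((ε * A + ω * M : ℝ) : ℂ) := by push_cast; ring
    have hRHS : ∑' n, (-(ε : ℂ) * dLap φ n + (ω : ℂ) * φ n) * (starRingEnd ℂ) (φ n)
        = ((Λ * P : ℝ) : ℂ) := by
      calc ∑' n, (-(ε : ℂ) * dLap φ n + (ω : ℂ) * φ n) * (starRingEnd ℂ) (φ n)
          = ∑' n, ((Λ * (‖φ n‖ ^ (2 * σ) * ‖φ n‖ ^ 2) : ℝ) : ℂ) := tsum_congr hpt
        _ = ((∑' n, Λ * (‖φ n‖ ^ (2 * σ) * ‖φ n‖ ^ 2) : ℝ) : ℂ) :=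
            (Complex.ofReal_tsum _).symm
        _ = ((Λ * P : ℝ) : ℂ) := by rw [hP, tsum_mul_left]
    have := hLHS.symm.trans hRHS
    exact_mod_cast this
  -- positivity of M
  have hMpos : 0 < M := by
    obtain ⟨m, hm⟩ := Function.ne_iff.mp hne
    have h1 : ‖φ m‖ ^ 2 ≤ M := Summable.le_tsum sM m (fun j _ => by positivity)
    have h2 : 0 < ‖φ m‖ ^ 2 := pow_pos (norm_pos_iff.mpr hm) 2
    linarith
  -- lam1 bounds
  have hmem : A / M ∈ { r : ℝ | ∃ ψ : Zn N → ℂ, suppIn K ψ ∧ ψ ≠ 0 ∧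
      r = (∑ ν : Fin N, ∑' n, ‖fdiff ν ψ n‖ ^ 2) / (∑' n, ‖ψ n‖ ^ 2) } :=
    ⟨φ, hsupp, hne, rfl⟩
  have hnonneg : ∀ r ∈ { r : ℝ | ∃ ψ : Zn N → ℂ, suppIn K ψ ∧ ψ ≠ 0 ∧
      r = (∑ ν : Fin N, ∑' n, ‖fdiff ν ψ n‖ ^ 2) / (∑' n, ‖ψ n‖ ^ 2) }, 0 ≤ r := by
    rintro r ⟨ψ, _, _, rfl⟩
    apply div_nonneg
    · exact Finset.sum_nonneg fun ν _ => tsum_nonneg fun n => by positivity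
    · exact tsum_nonneg fun n => by positivity
  have hbdd : BddBelow { r : ℝ | ∃ ψ : Zn N → ℂ, suppIn K ψ ∧ ψ ≠ 0 ∧
      r = (∑ ν : Fin N, ∑' n, ‖fdiff ν ψ n‖ ^ 2) / (∑' n, ‖ψ n‖ ^ 2) } :=
    ⟨0, fun r hr => hnonneg r hr⟩
  have hlam_le : lam1 N K ≤ A / M := csInf_le hbdd hmem
  have hlam_nonneg : 0 ≤ lam1 N K := le_csInf ⟨A / M, hmem⟩ hnonneg
  have hA_ge : lam1 N K * M ≤ A := by
    have := (le_div_iff₀ hMpos).mp hlam_le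
    linarith
  -- nonlinear term bound
  have hP_le : P ≤ M ^ σ * M := by
    have h0 : P ≤ ∑' n, M ^ σ * ‖φ n‖ ^ 2 := by
      rw [hP]
      refine Summable.tsum_le_tsum (fun n => ?_) sP (sM.mul_left _)
      have h1 : ‖φ n‖ ^ (2 * σ) = (‖φ n‖ ^ 2) ^ σ := by
        rw [← Real.rpow_natCast ‖φ n‖ 2, ← Real.rpow_mul (norm_nonneg _)]
        norm_num
      have h2 : ‖φ n‖ ^ 2 ≤ M := Summable.le_tsum sM n (fun j _ => by positivity)
      have h3 : (‖φ n‖ ^ 2) ^ σ ≤ M ^ σ := Real.rpow_le_rpow (by positivity) h2 hσ.le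
      have h4 : 0 ≤ ‖φ n‖ ^ 2 := by positivity
      calc ‖φ n‖ ^ (2 * σ) * ‖φ n‖ ^ 2 = (‖φ n‖ ^ 2) ^ σ * ‖φ n‖ ^ 2 := by rw [h1]
        _ ≤ M ^ σ * ‖φ n‖ ^ 2 := mul_le_mul_of_nonneg_right h3 h4
    rwa [tsum_mul_left, ← hM] at h0
  -- combine
  have key : ε * lam1 N K + ω ≤ Λ * M ^ σ := by
    have h1 : (ε * lam1 N K + ω) * M ≤ (Λ * M ^ σ) * M := by
      have hAA : ε * (lam1 N K * M) ≤ ε * A := by nlinarith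
      have hPP : Λ * P ≤ Λ * (M ^ σ * M) := by nlinarith
      nlinarith [hmain]
    exact le_of_mul_le_mul_right h1 hMpos
  have hnum : 0 ≤ ε * lam1 N K + ω := by nlinarith
  have hx : (ε * lam1 N K + ω) / (Λ * (2 * σ + 1)) ≤ M ^ σ := by
    have h1 : (ε * lam1 N K + ω) / (Λ * (2 * σ + 1)) ≤ (ε * lam1 N K + ω) / Λ :=
      div_le_div_of_nonneg_left hnum hΛ (by nlinarith)
    have h2 : (ε * lam1 N K + ω) / Λ ≤ M ^ σ := (div_le_iff₀ hΛ).mpr (by nlinarith [key])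
    linarith
  have hx0 : 0 ≤ (ε * lam1 N K + ω) / (Λ * (2 * σ + 1)) :=
    div_nonneg hnum (by positivity)
  calc ((ε * lam1 N K + ω) / (Λ * (2 * σ + 1))) ^ (1 / σ)
      ≤ (M ^ σ) ^ (1 / σ) := Real.rpow_le_rpow hx0 hx (by positivity)
    _ = M := by
        rw [← Real.rpow_mul hMpos.le, mul_one_div, div_self hσ.ne', Real.rpow_one]
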